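/- For every h₁, h₂ > 0, every polynomial q(x, y) = ∑_{0 ≤ p, r ≤ 2} c_{p,r} x^p y^r of degree at most 2 in each variable, and every (x, y) ∈ ℝ², the tensor-product modified B-spline interpolant reproduces q exactly: ∑_{(j₁, j₂) ∈ ℤ²} q(j₁h₁, j₂h₂) · W₄(x − j₁h₁, h₁) · W₄(y − j₂h₂, h₂) = q(x, y). -/

import Mathlib

/-- Monaghan's modified cubic B-spline interpolation kernel `W₄`. -/
noncomputable def W4 (x h : ℝ) : ℝ :=
  let s := |x| / h
  if s ≤ 1 then 1 - 5/2 * s^2 + 3/2 * s^3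
  else if s ≤ 2 then 1/2 * (2 - s)^2 * (1 - s)
  else 0

/-- the four-point neighborhood of `z/h` in the lattice -/
noncomputable def W4S (h z : ℝ) : Finset ℤ := {⌊z/h⌋ - 1, ⌊z/h⌋, ⌊z/h⌋ + 1, ⌊z/h⌋ + 2}

lemma W4_eq (x h : ℝ) (s : ℝ) (hs : |x| / h = s) :
    W4 x h = if s ≤ 1 then 1 - 5/2 * s^2 + 3/2 * s^3
      else if s ≤ 2 then 1/2 * (2 - s)^2 * (1 - s) else 0 := by
  unfold W4; rw [hs]

lemma W4_abs_div (z h : ℝ) (hh : 0 < h) (j : ℤ) :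
    |z - j * h| / h = |z / h - j| := by
  have h1 : z - j * h = (z / h - j) * h := by field_simp
  rw [h1, abs_mul, abs_of_pos hh, mul_div_cancel_right₀ _ (ne_of_gt hh)]

lemma W4_zero_of_ge (x h : ℝ) (hh : 0 < h) (hx : 2 ≤ |x| / h) : W4 x h = 0 := by
  unfold W4
  simp only
  split_ifs with h1 h2
  · linarith
  · have : |x| / h = 2 := le_antisymm h2 hx
    rw [this]; ring
  · rfl

lemma W4_outside (h : ℝ) (hh : 0 < h) (z : ℝ) (j : ℤ) (hj : j ∉ W4S h z) :
    W4 (z - j * h) h = 0 := by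
  apply W4_zero_of_ge _ _ hh
  rw [W4_abs_div z h hh j]
  have h1 : (⌊z/h⌋ : ℝ) ≤ z/h := Int.floor_le _
  have h2 : z/h < ⌊z/h⌋ + 1 := Int.lt_floor_add_one _
  have hcase : j ≤ ⌊z/h⌋ - 2 ∨ ⌊z/h⌋ + 3 ≤ j := by
    simp only [W4S, Finset.mem_insert, Finset.mem_singleton] at hj
    omega
  rcases hcase with hc | hc
  · have : (j : ℝ) ≤ (⌊z/h⌋ : ℝ) - 2 := by
      have : ((j:ℤ):ℝ) ≤ ((⌊z/h⌋ - 2 : ℤ):ℝ) := Int.cast_le.mpr hc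
      push_cast at this; linarith
    rw [abs_of_nonneg (by linarith)]; linarith
  · have : (⌊z/h⌋ : ℝ) + 3 ≤ (j : ℝ) := by exact_mod_cast hc
    rw [abs_of_nonpos (by linarith)]; linarith

lemma oneD (h : ℝ) (hh : 0 < h) (z : ℝ) (p : ℕ) (hp : p ≤ 2) :
    ∑ j ∈ W4S h z, ((j : ℝ) * h) ^ p * W4 (z - j * h) h = z ^ p := by
  set n : ℤ := ⌊z/h⌋ with hn
  set u : ℝ := z/h - n with hu
  have hu0 : 0 ≤ u := by simp [hu]; exact Int.floor_le _
  have hu1 : u < 1 := by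
    have := Int.lt_floor_add_one (z/h); simp [hu]; linarith
  have hz : z = ((n : ℝ) + u) * h := by rw [hu]; field_simp; ring
  -- the four kernel values
  have va : W4 (z - ((n : ℝ) - 1) * h) h = -u * (1 - u)^2 / 2 := by
    have hs : |z - ((n:ℝ) - 1) * h| / h = u + 1 := by
      have : z - ((n:ℝ) - 1) * h = (u + 1) * h := by rw [hz]; ring
      rw [this, abs_mul, abs_of_pos hh, abs_of_nonneg (by linarith),
        mul_div_cancel_right₀ _ (ne_of_gt hh)]
    rw [W4_eq _ _ _ hs]
    split_ifs with h1 h2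
    · have : u = 0 := le_antisymm (by linarith) hu0
      rw [this]; ring
    · ring
    · linarith
  have vb : W4 (z - (n : ℝ) * h) h = 1 - 5/2 * u^2 + 3/2 * u^3 := by
    have hs : |z - (n:ℝ) * h| / h = u := by
      have : z - (n:ℝ) * h = u * h := by rw [hz]; ring
      rw [this, abs_mul, abs_of_pos hh, abs_of_nonneg hu0,
        mul_div_cancel_right₀ _ (ne_of_gt hh)]
    rw [W4_eq _ _ _ hs, if_pos (by linarith)]
  have vc : W4 (z - ((n : ℝ) + 1) * h) h = 1 - 5/2 * (1-u)^2 + 3/2 * (1-u)^3 := by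
    have hs : |z - ((n:ℝ) + 1) * h| / h = 1 - u := by
      have : z - ((n:ℝ) + 1) * h = (-(1 - u)) * h := by rw [hz]; ring
      rw [this, abs_mul, abs_of_pos hh, abs_neg, abs_of_nonneg (by linarith),
        mul_div_cancel_right₀ _ (ne_of_gt hh)]
    rw [W4_eq _ _ _ hs, if_pos (by linarith)]
  have vd : W4 (z - ((n : ℝ) + 2) * h) h = u^2 * (u - 1) / 2 := by
    have hs : |z - ((n:ℝ) + 2) * h| / h = 2 - u := by
      have : z - ((n:ℝ) + 2) * h = (-(2 - u)) * h := by rw [hz]; ring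
      rw [this, abs_mul, abs_of_pos hh, abs_neg, abs_of_nonneg (by linarith),
        mul_div_cancel_right₀ _ (ne_of_gt hh)]
    rw [W4_eq _ _ _ hs]
    split_ifs with h1 h2
    · have : u = 1 := by linarith
      rw [this]; ring
    · ring
    · linarith
  have hset : W4S h z = {n - 1, n, n + 1, n + 2} := rfl
  rw [hset]
  rw [Finset.sum_insert (by simp only [Finset.mem_insert, Finset.mem_singleton]; omega), Finset.sum_insert (by simp only [Finset.mem_insert, Finset.mem_singleton]; omega),
    Finset.sum_insert (by simp only [Finset.mem_insert, Finset.mem_singleton]; omega), Finset.sum_singleton]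
  push_cast
  rw [va, vb, vc, vd, hz]
  interval_cases p <;> ring

lemma poly1D (h : ℝ) (hh : 0 < h) (z : ℝ) (d : Fin 3 → ℝ) :
    ∑ j ∈ W4S h z, (∑ r : Fin 3, d r * ((j : ℝ) * h) ^ (r : ℕ)) * W4 (z - j * h) h
      = ∑ r : Fin 3, d r * z ^ (r : ℕ) := by
  simp only [Finset.sum_mul]
  rw [Finset.sum_comm]
  refine Finset.sum_congr rfl fun r _ => ?_
  simp only [mul_assoc, ← Finset.mul_sum]
  rw [oneD h hh z r (by omega)]

/-- The tensor-product modified B-spline interpolant exactly reproduces every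
polynomial `q(x, y) = ∑_{0 ≤ p, r ≤ 2} c_{p,r} x^p y^r` of degree at most 2 in
each variable. -/
theorem W4_tensor_reproduces_biquadratics
    (h₁ h₂ : ℝ) (hh₁ : 0 < h₁) (hh₂ : 0 < h₂)
    (c : Fin 3 → Fin 3 → ℝ)
    (q : ℝ → ℝ → ℝ)
    (hq : ∀ x y : ℝ, q x y = ∑ p : Fin 3, ∑ r : Fin 3, c p r * x ^ (p : ℕ) * y ^ (r : ℕ))
    (x y : ℝ) :
    ∑' j : ℤ × ℤ, q (j.1 * h₁) (j.2 * h₂) * W4 (x - j.1 * h₁) h₁ * W4 (y - j.2 * h₂) h₂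
      = q x y := by
  have hq' : ∀ a b : ℝ, q a b = ∑ r : Fin 3, (∑ p : Fin 3, c p r * a ^ (p:ℕ)) * b ^ (r:ℕ) := by
    intro a b
    rw [hq, Finset.sum_comm]
    refine Finset.sum_congr rfl fun r _ => ?_
    rw [Finset.sum_mul]
  have hq'' : ∀ b a : ℝ, q a b = ∑ p : Fin 3, (∑ r : Fin 3, c p r * b ^ (r:ℕ)) * a ^ (p:ℕ) := by
    intro b a
    rw [hq]
    refine Finset.sum_congr rfl fun p _ => ?_
    rw [Finset.sum_mul]
    refine Finset.sum_congr rfl fun r _ => ?_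
    ring
  have hzero : ∀ j : ℤ × ℤ, j ∉ W4S h₁ x ×ˢ W4S h₂ y →
      q (j.1 * h₁) (j.2 * h₂) * W4 (x - j.1 * h₁) h₁ * W4 (y - j.2 * h₂) h₂ = 0 := by
    intro j hj
    rw [Finset.mem_product, not_and_or] at hj
    rcases hj with hj | hj
    · rw [W4_outside h₁ hh₁ x j.1 hj]; ring
    · rw [W4_outside h₂ hh₂ y j.2 hj]; ring
  rw [tsum_eq_sum hzero, Finset.sum_product]
  have inner : ∀ j₁ : ℤ, ∑ j₂ ∈ W4S h₂ y,
      q ((j₁:ℝ) * h₁) ((j₂:ℝ) * h₂) * W4 (x - j₁ * h₁) h₁ * W4 (y - j₂ * h₂) h₂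
      = q ((j₁:ℝ) * h₁) y * W4 (x - j₁ * h₁) h₁ := by
    intro j₁
    have key : ∑ j₂ ∈ W4S h₂ y, q ((j₁:ℝ) * h₁) ((j₂:ℝ) * h₂) * W4 (y - j₂ * h₂) h₂
        = q ((j₁:ℝ) * h₁) y := by
      simp only [hq' ((j₁:ℝ) * h₁)]
      exact poly1D h₂ hh₂ y _
    calc ∑ j₂ ∈ W4S h₂ y,
          q ((j₁:ℝ) * h₁) ((j₂:ℝ) * h₂) * W4 (x - j₁ * h₁) h₁ * W4 (y - j₂ * h₂) h₂
        = (∑ j₂ ∈ W4S h₂ y, q ((j₁:ℝ) * h₁) ((j₂:ℝ) * h₂) * W4 (y - j₂ * h₂) h₂) *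
            W4 (x - j₁ * h₁) h₁ := by
          rw [Finset.sum_mul]
          refine Finset.sum_congr rfl fun j₂ _ => ?_
          ring
      _ = q ((j₁:ℝ) * h₁) y * W4 (x - j₁ * h₁) h₁ := by rw [key]
  simp only [inner]
  simp only [hq'' y]
  exact poly1D h₁ hh₁ x _
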